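/- In the Gauss–Markov linear model Y = B^T X + E with E ~ MN(0, Σ_ε, I_N) given X, the conditional total training error MSE_training|X = (1/N) trace(E_X[(Y - B̂_λ^T X)^T(Y - B̂_λ^T X)]) equals trace(Σ_ε) + (1/N) trace(Σ_ε) trace(Z_λ (R_λ X X^T - 2 I_p)) + λ² N trace(R_λ B B^T R_λ X X^T). -/

import Mathlib

open Matrix MeasureTheory ProbabilityTheory

/-- `D` is matrix-normal `MN(M, U, V)`: every linear functional `⟨L, D⟩` is real
Gaussian with mean `⟨L, M⟩` and variance `trace(Lᵀ U L V)`. -/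
def IsMatrixNormal {Ω : Type*} [MeasurableSpace Ω] (μ : Measure Ω) {m n : ℕ}
    (D : Ω → Matrix (Fin m) (Fin n) ℝ) (M : Matrix (Fin m) (Fin n) ℝ)
    (U : Matrix (Fin m) (Fin m) ℝ) (V : Matrix (Fin n) (Fin n) ℝ) : Prop :=
  ∀ L : Matrix (Fin m) (Fin n) ℝ,
    Measure.map (fun ω => ∑ i, ∑ j, L i j * D ω i j) μ =
      gaussianReal (∑ i, ∑ j, L i j * M i j) (Real.toNNReal (Matrix.trace (Lᵀ * U * L * V)))

open Real Set NNReal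



lemma int_mul_exp_neg_mul_sq_eq_zero (b : ℝ) :
    ∫ x : ℝ, x * rexp (-b * x ^ 2) = 0 := by
  have h := MeasureTheory.integral_neg_eq_self (fun x : ℝ => x * rexp (-b * x ^ 2)) volume
  simp only [neg_sq] at h
  have h2 : ∫ x : ℝ, -x * rexp (-b * x ^ 2) = -∫ x : ℝ, x * rexp (-b * x ^ 2) := by
    simp_rw [neg_mul]
    exact integral_neg _
  rw [← h] at h2 ⊢
  linarith [h2]

lemma int_sq_mul_exp_neg_mul_sq {b : ℝ} (hb : 0 < b) :
    ∫ x : ℝ, x ^ 2 * rexp (-b * x ^ 2) = (2 * b)⁻¹ * Real.sqrt (π / b) := by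
  have habs : ∫ x : ℝ, x ^ 2 * rexp (-b * x ^ 2)
      = 2 * ∫ x in Ioi (0:ℝ), x ^ 2 * rexp (-b * x ^ 2) := by
    rw [← integral_comp_abs (f := fun x : ℝ => x ^ 2 * rexp (-b * x ^ 2))]
    congr 1 with x
    rw [sq_abs]
  have hpow : ∀ x : ℝ, x ^ (2:ℝ) = x ^ 2 := fun x => by
    rw [show (2:ℝ) = ((2:ℕ):ℝ) by norm_num, Real.rpow_natCast]
  have key : ∫ x in Ioi (0:ℝ), x ^ 2 * rexp (-b * x ^ 2)
      = b ^ (-(3:ℝ)/2) * (1/2) * Real.Gamma (3/2) := by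
    have h := integral_rpow_mul_exp_neg_mul_rpow (p := 2) (q := 2) (b := b)
      (by norm_num) (by norm_num) hb
    simp only [hpow] at h
    rw [h]
    norm_num
  have hGamma : Real.Gamma (3/2) = Real.sqrt π / 2 := by
    have : Real.Gamma (1/2 + 1) = (1/2) * Real.Gamma (1/2) :=
      Real.Gamma_add_one (by norm_num)
    rw [show (3:ℝ)/2 = 1/2 + 1 by norm_num, this, Real.Gamma_one_half_eq]
    ring
  have hb32 : b ^ (-(3:ℝ)/2) = (Real.sqrt b)⁻¹ * b⁻¹ := by
    rw [show -(3:ℝ)/2 = -(1/2) + -1 by norm_num, Real.rpow_add hb, Real.rpow_neg_one,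
      Real.rpow_neg hb.le, ← Real.sqrt_eq_rpow]
  rw [habs, key, hGamma, hb32, Real.sqrt_div Real.pi_pos.le]
  have hsb : Real.sqrt b ≠ 0 := ne_of_gt (Real.sqrt_pos.mpr hb)
  field_simp

section GaussMoments
variable {v : ℝ≥0}

lemma integrable_dirac0 {f : ℝ → ℝ} (hf : Measurable f) {a : ℝ} :
    Integrable f (Measure.dirac a) := by
  refine ⟨hf.aestronglyMeasurable, ?_⟩
  rw [HasFiniteIntegral, lintegral_dirac' _ hf.enorm]
  exact enorm_lt_top

lemma gauss_withDensity (hv : v ≠ 0) :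
    gaussianReal 0 v
      = volume.withDensity (fun x => ((Real.toNNReal (gaussianPDFReal 0 v x) : NNReal) : ENNReal)) := by
  rw [gaussianReal_of_var_ne_zero 0 hv]
  rfl

lemma gauss_integrable_iff (hv : v ≠ 0) (g : ℝ → ℝ) :
    Integrable g (gaussianReal 0 v)
      ↔ Integrable (fun x => gaussianPDFReal 0 v x * g x) volume := by
  rw [gauss_withDensity hv,
    integrable_withDensity_iff_integrable_smul (measurable_gaussianPDFReal 0 v).real_toNNReal]
  constructor <;> intro h <;> refine h.congr (Filter.Eventually.of_forall fun x => ?_) <;>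
    simp [NNReal.smul_def, Real.coe_toNNReal _ (gaussianPDFReal_nonneg 0 v x)]

lemma gauss_integral_eq (hv : v ≠ 0) (g : ℝ → ℝ) :
    ∫ x, g x ∂(gaussianReal 0 v) = ∫ x, gaussianPDFReal 0 v x * g x := by
  rw [gauss_withDensity hv,
    integral_withDensity_eq_integral_smul (measurable_gaussianPDFReal 0 v).real_toNNReal]
  congr 1 with x
  simp [NNReal.smul_def, Real.coe_toNNReal _ (gaussianPDFReal_nonneg 0 v x)]

lemma gauss_pdf_eq (hv : v ≠ 0) (x : ℝ) :
    gaussianPDFReal 0 v x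
      = (Real.sqrt (2 * π * v))⁻¹ * rexp (-(2 * (v:ℝ))⁻¹ * x ^ 2) := by
  rw [gaussianPDFReal]
  congr 1
  rw [sub_zero]
  ring

lemma gauss_b_pos (hv : v ≠ 0) : 0 < (2 * (v:ℝ))⁻¹ := by
  have : 0 < (v:ℝ) := by positivity
  positivity

lemma integrable_id_gaussianReal0 (v : ℝ≥0) : Integrable (fun x => x) (gaussianReal 0 v) := by
  by_cases hv : v = 0
  · rw [hv, gaussianReal_zero_var]
    exact integrable_dirac0 measurable_id
  · rw [gauss_integrable_iff hv]
    have h := ((integrable_mul_exp_neg_mul_sq (gauss_b_pos hv)).const_mul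
      (Real.sqrt (2 * π * v))⁻¹)
    refine h.congr (Filter.Eventually.of_forall fun x => ?_)
    simp only [gauss_pdf_eq hv]
    ring

lemma integrable_sq_gaussianReal0 (v : ℝ≥0) :
    Integrable (fun x => x ^ 2) (gaussianReal 0 v) := by
  by_cases hv : v = 0
  · rw [hv, gaussianReal_zero_var]
    exact integrable_dirac0 (measurable_id.pow_const 2)
  · rw [gauss_integrable_iff hv]
    have h := ((integrable_rpow_mul_exp_neg_mul_sq (gauss_b_pos hv)
      (by norm_num : (-1:ℝ) < 2)).const_mul (Real.sqrt (2 * π * v))⁻¹)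
    refine h.congr (Filter.Eventually.of_forall fun x => ?_)
    simp only [gauss_pdf_eq hv, show ∀ y:ℝ, y ^ (2:ℝ) = y ^ 2 from fun y => by
      rw [show (2:ℝ) = ((2:ℕ):ℝ) by norm_num, Real.rpow_natCast]]
    ring

lemma integral_id_gaussianReal0 (v : ℝ≥0) : ∫ x, x ∂(gaussianReal 0 v) = 0 := by
  by_cases hv : v = 0
  · simp [hv, gaussianReal_zero_var]
  · rw [gauss_integral_eq hv]
    have : ∫ x, gaussianPDFReal 0 v x * x
        = (Real.sqrt (2 * π * v))⁻¹ * ∫ x : ℝ, x * rexp (-(2 * (v:ℝ))⁻¹ * x ^ 2) := by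
      rw [← integral_const_mul]
      congr 1 with x
      rw [gauss_pdf_eq hv]
      ring
    rw [this, int_mul_exp_neg_mul_sq_eq_zero, mul_zero]

lemma integral_sq_gaussianReal0 (v : ℝ≥0) : ∫ x, x ^ 2 ∂(gaussianReal 0 v) = v := by
  by_cases hv : v = 0
  · simp [hv, gaussianReal_zero_var]
  · rw [gauss_integral_eq hv]
    have hvpos : 0 < (v:ℝ) := by positivity
    set b : ℝ := (2 * (v:ℝ))⁻¹ with hbdef
    have hb : 0 < b := gauss_b_pos hv
    have : ∫ x, gaussianPDFReal 0 v x * x ^ 2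
        = (Real.sqrt (2 * π * v))⁻¹ * ∫ x : ℝ, x ^ 2 * rexp (-b * x ^ 2) := by
      rw [← integral_const_mul]
      congr 1 with x
      rw [gauss_pdf_eq hv]
      ring
    rw [this, int_sq_mul_exp_neg_mul_sq hb]
    have h1 : (2 * b)⁻¹ = (v:ℝ) := by
      rw [hbdef]
      field_simp
    have h2 : π / b = 2 * π * (v:ℝ) := by
      rw [hbdef]
      field_simp
    rw [h1, h2]
    have hs : Real.sqrt (2 * π * (v:ℝ)) ≠ 0 := by
      refine ne_of_gt (Real.sqrt_pos.mpr ?_)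
      positivity
    field_simp



section Transfer
variable {Ω : Type*} [MeasurableSpace Ω] {μ : Measure Ω}

lemma map_gauss_integrable {f : Ω → ℝ} (hf : Measurable f) {v : ℝ≥0}
    (h : Measure.map f μ = gaussianReal 0 v)
    (hint : Integrable (fun x : ℝ => x) (gaussianReal 0 v)) : Integrable f μ := by
  have := (integrable_map_measure aestronglyMeasurable_id hf.aemeasurable).mp
    (h ▸ hint)
  simpa using this

lemma map_gauss_integral {f : Ω → ℝ} (hf : Measurable f) {v : ℝ≥0}
    (h : Measure.map f μ = gaussianReal 0 v) :
    ∫ ω, f ω ∂μ = ∫ x, x ∂(gaussianReal 0 v) := by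
  rw [← h]
  exact (integral_map hf.aemeasurable measurable_id.aestronglyMeasurable).symm

lemma map_gauss_integrable_sq {f : Ω → ℝ} (hf : Measurable f) {v : ℝ≥0}
    (h : Measure.map f μ = gaussianReal 0 v)
    (hint : Integrable (fun x : ℝ => x ^ 2) (gaussianReal 0 v)) :
    Integrable (fun ω => f ω ^ 2) μ := by
  have := (integrable_map_measure
    (g := fun x : ℝ => x ^ 2) (measurable_id.pow_const 2).aestronglyMeasurable
    hf.aemeasurable).mp (h ▸ hint)
  exact this

lemma map_gauss_integral_sq {f : Ω → ℝ} (hf : Measurable f) {v : ℝ≥0}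
    (h : Measure.map f μ = gaussianReal 0 v) :
    ∫ ω, f ω ^ 2 ∂μ = ∫ x, x ^ 2 ∂(gaussianReal 0 v) := by
  rw [← h]
  exact (integral_map (f := fun x : ℝ => x ^ 2) hf.aemeasurable
    (measurable_id.pow_const 2).aestronglyMeasurable).symm

end Transfer

section StdBasis
variable {q N : ℕ} (Seps : Matrix (Fin q) (Fin q) ℝ)

lemma sum_stdBasis_mul (D : Matrix (Fin q) (Fin N) ℝ) (i : Fin q) (j : Fin N) :
    ∑ a, ∑ b, Matrix.single i j (1:ℝ) a b * D a b = D i j := by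
  simp [Matrix.single, ite_mul, ite_and, Finset.sum_ite_eq]

lemma trace_stdBasis (i k : Fin q) (j l : Fin N) :
    Matrix.trace ((Matrix.single i j (1:ℝ))ᵀ * Seps * Matrix.single k l (1:ℝ)
        * (1 : Matrix (Fin N) (Fin N) ℝ))
      = if j = l then Seps i k else 0 := by
  rw [mul_one]
  simp [Matrix.trace, Matrix.diag, Matrix.mul_apply, Matrix.transpose_apply, Matrix.single,
    ite_and, ite_mul, mul_ite, Finset.sum_ite_eq, Finset.sum_ite_eq', eq_comm]



section Moments
variable {Ω : Type*} [MeasurableSpace Ω] {μ : Measure Ω}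
  {q N : ℕ} {E : Ω → Matrix (Fin q) (Fin N) ℝ} {Seps : Matrix (Fin q) (Fin q) ℝ}

lemma trace_psd_nonneg {n m : ℕ} {S : Matrix (Fin n) (Fin n) ℝ} (hS : S.PosSemidef)
    (L : Matrix (Fin n) (Fin m) ℝ) : 0 ≤ (Lᵀ * S * L).trace := by
  have h : (Lᵀ * S * L).PosSemidef := by
    have := hS.conjTranspose_mul_mul_same L
    simpa [Matrix.conjTranspose_eq_transpose_of_trivial] using this
  rw [Matrix.trace]
  refine Finset.sum_nonneg fun a _ => ?_
  exact h.diag_nonneg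

lemma matrixNormal_entry_map (hE : ∀ i j, Measurable fun ω => E ω i j)
    (hMN : IsMatrixNormal μ E 0 Seps 1) (i : Fin q) (j : Fin N) :
    Measure.map (fun ω => E ω i j) μ = gaussianReal 0 (Real.toNNReal (Seps i i)) := by
  have h := hMN (Matrix.single i j 1)
  have hfun : (fun ω => ∑ a, ∑ b, Matrix.single i j (1:ℝ) a b * E ω a b)
      = fun ω => E ω i j := funext fun ω => sum_stdBasis_mul (E ω) i j
  rw [hfun] at h
  have hmean : (∑ a, ∑ b, Matrix.single i j (1:ℝ) a b
      * (0 : Matrix (Fin q) (Fin N) ℝ) a b) = 0 := by simp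
  rw [hmean, trace_stdBasis Seps i i j j, if_pos rfl] at h
  exact h

lemma matrixNormal_pair_map (hE : ∀ i j, Measurable fun ω => E ω i j)
    (hMN : IsMatrixNormal μ E 0 Seps 1) (hSh : Sepsᵀ = Seps)
    (i k : Fin q) (j l : Fin N) :
    Measure.map (fun ω => E ω i j + E ω k l) μ
      = gaussianReal 0 (Real.toNNReal (Matrix.trace
          ((Matrix.single i j (1:ℝ) + Matrix.single k l (1:ℝ))ᵀ * Seps
            * (Matrix.single i j (1:ℝ) + Matrix.single k l (1:ℝ))
            * (1 : Matrix (Fin N) (Fin N) ℝ)))) := by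
  have h := hMN (Matrix.single i j 1 + Matrix.single k l (1:ℝ))
  have hfun : (fun ω => ∑ a, ∑ b, (Matrix.single i j (1:ℝ) + Matrix.single k l (1:ℝ)) a b
      * E ω a b) = fun ω => E ω i j + E ω k l := by
    funext ω
    simp only [Matrix.add_apply, add_mul, Finset.sum_add_distrib]
    rw [sum_stdBasis_mul (E ω) i j, sum_stdBasis_mul (E ω) k l]
  rw [hfun] at h
  have hmean : (∑ a, ∑ b, (Matrix.single i j (1:ℝ) + Matrix.single k l (1:ℝ)) a b
      * (0 : Matrix (Fin q) (Fin N) ℝ) a b) = 0 := by simp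
  rw [hmean] at h
  exact h

lemma trace_pair (hSh : Sepsᵀ = Seps) (i k : Fin q) (j l : Fin N) :
    Matrix.trace ((Matrix.single i j (1:ℝ) + Matrix.single k l (1:ℝ))ᵀ * Seps
        * (Matrix.single i j (1:ℝ) + Matrix.single k l (1:ℝ))
        * (1 : Matrix (Fin N) (Fin N) ℝ))
      = Seps i i + Seps k k + 2 * (if j = l then Seps i k else 0) := by
  simp only [Matrix.transpose_add, Matrix.add_mul, Matrix.mul_add, Matrix.trace_add]
  rw [trace_stdBasis Seps i i j j, trace_stdBasis Seps i k j l, trace_stdBasis Seps k i l j,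
    trace_stdBasis Seps k k l l]
  have hsym : Seps k i = Seps i k := by
    nth_rewrite 1 [← hSh]
    rw [Matrix.transpose_apply]
  by_cases hjl : j = l
  · subst hjl
    simp [hsym]
    ring
  · have hlj : ¬ l = j := fun h => hjl h.symm
    simp [hjl, hlj]

lemma entry_integrable (hE : ∀ i j, Measurable fun ω => E ω i j)
    (hMN : IsMatrixNormal μ E 0 Seps 1) (i : Fin q) (j : Fin N) :
    Integrable (fun ω => E ω i j) μ :=
  map_gauss_integrable (hE i j) (matrixNormal_entry_map hE hMN i j)
    (integrable_id_gaussianReal0 _)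

lemma entry_integral (hE : ∀ i j, Measurable fun ω => E ω i j)
    (hMN : IsMatrixNormal μ E 0 Seps 1) (i : Fin q) (j : Fin N) :
    ∫ ω, E ω i j ∂μ = 0 := by
  rw [map_gauss_integral (hE i j) (matrixNormal_entry_map hE hMN i j),
    integral_id_gaussianReal0]

lemma entry_sq_integrable (hE : ∀ i j, Measurable fun ω => E ω i j)
    (hMN : IsMatrixNormal μ E 0 Seps 1) (i : Fin q) (j : Fin N) :
    Integrable (fun ω => E ω i j ^ 2) μ :=
  map_gauss_integrable_sq (hE i j) (matrixNormal_entry_map hE hMN i j)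
    (integrable_sq_gaussianReal0 _)

lemma entry_sq_integral (hS : Seps.PosSemidef) (hE : ∀ i j, Measurable fun ω => E ω i j)
    (hMN : IsMatrixNormal μ E 0 Seps 1) (i : Fin q) (j : Fin N) :
    ∫ ω, E ω i j ^ 2 ∂μ = Seps i i := by
  rw [map_gauss_integral_sq (hE i j) (matrixNormal_entry_map hE hMN i j),
    integral_sq_gaussianReal0]
  refine Real.coe_toNNReal _ ?_
  have h := trace_psd_nonneg hS (Matrix.single i j (1:ℝ))
  have := trace_stdBasis Seps i i j j
  rw [mul_one] at this
  rw [this, if_pos rfl] at h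
  exact h

lemma pair_sq_integrable (hE : ∀ i j, Measurable fun ω => E ω i j)
    (hMN : IsMatrixNormal μ E 0 Seps 1) (hSh : Sepsᵀ = Seps)
    (i k : Fin q) (j l : Fin N) :
    Integrable (fun ω => (E ω i j + E ω k l) ^ 2) μ :=
  map_gauss_integrable_sq ((hE i j).add (hE k l))
    (matrixNormal_pair_map hE hMN hSh i k j l) (integrable_sq_gaussianReal0 _)

lemma pair_sq_integral (hS : Seps.PosSemidef) (hE : ∀ i j, Measurable fun ω => E ω i j)
    (hMN : IsMatrixNormal μ E 0 Seps 1) (hSh : Sepsᵀ = Seps)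
    (i k : Fin q) (j l : Fin N) :
    ∫ ω, (E ω i j + E ω k l) ^ 2 ∂μ
      = Seps i i + Seps k k + 2 * (if j = l then Seps i k else 0) := by
  rw [map_gauss_integral_sq (f := fun ω => E ω i j + E ω k l) ((hE i j).add (hE k l))
    (matrixNormal_pair_map hE hMN hSh i k j l), integral_sq_gaussianReal0]
  rw [← trace_pair hSh i k j l]
  refine Real.coe_toNNReal _ ?_
  have h := trace_psd_nonneg hS (Matrix.single i j (1:ℝ) + Matrix.single k l (1:ℝ))
  rwa [← mul_one ((Matrix.single i j (1:ℝ) + Matrix.single k l (1:ℝ))ᵀ * Seps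
    * (Matrix.single i j (1:ℝ) + Matrix.single k l (1:ℝ)))] at h

lemma entry_mul_integrable (hE : ∀ i j, Measurable fun ω => E ω i j)
    (hMN : IsMatrixNormal μ E 0 Seps 1) (hSh : Sepsᵀ = Seps)
    (i k : Fin q) (j l : Fin N) :
    Integrable (fun ω => E ω i j * E ω k l) μ := by
  have h := ((pair_sq_integrable hE hMN hSh i k j l).sub
    (entry_sq_integrable hE hMN i j)).sub (entry_sq_integrable hE hMN k l)
  have h2 := h.div_const 2
  refine h2.congr (Filter.Eventually.of_forall fun ω => ?_)
  simp only [Pi.sub_apply]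
  ring

lemma entry_mul_integral (hS : Seps.PosSemidef) (hE : ∀ i j, Measurable fun ω => E ω i j)
    (hMN : IsMatrixNormal μ E 0 Seps 1) (hSh : Sepsᵀ = Seps)
    (i k : Fin q) (j l : Fin N) :
    ∫ ω, E ω i j * E ω k l ∂μ = if j = l then Seps i k else 0 := by
  have heq : (fun ω => E ω i j * E ω k l)
      = fun ω => ((E ω i j + E ω k l) ^ 2 - E ω i j ^ 2 - E ω k l ^ 2) / 2 := by
    funext ω; ring
  rw [heq]
  rw [integral_div]
  have h1 : Integrable (fun ω => (E ω i j + E ω k l) ^ 2 - E ω i j ^ 2) μ :=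
    (pair_sq_integrable hE hMN hSh i k j l).sub (entry_sq_integrable hE hMN i j)
  rw [integral_sub h1 (entry_sq_integrable hE hMN k l),
    integral_sub (pair_sq_integrable hE hMN hSh i k j l) (entry_sq_integrable hE hMN i j),
    pair_sq_integral hS hE hMN hSh i k j l, entry_sq_integral hS hE hMN i j,
    entry_sq_integral hS hE hMN k l]
  ring

end Moments

section TraceHelpers
variable {p q N : ℕ}

lemma sum3_rev {α β γ : Type*} [Fintype α] [Fintype β] [Fintype γ] (f : α → β → γ → ℝ) :
    ∑ a, ∑ b, ∑ c, f a b c = ∑ c, ∑ b, ∑ a, f a b c := by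
  calc ∑ a, ∑ b, ∑ c, f a b c
      = ∑ a, ∑ c, ∑ b, f a b c := Finset.sum_congr rfl fun a _ => Finset.sum_comm
    _ = ∑ c, ∑ a, ∑ b, f a b c := Finset.sum_comm
    _ = ∑ c, ∑ b, ∑ a, f a b c := Finset.sum_congr rfl fun c _ => Finset.sum_comm

lemma sum3_cyc {α β γ : Type*} [Fintype α] [Fintype β] [Fintype γ] (f : α → β → γ → ℝ) :
    ∑ a, ∑ b, ∑ c, f a b c = ∑ b, ∑ c, ∑ a, f a b c := by
  calc ∑ a, ∑ b, ∑ c, f a b c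
      = ∑ b, ∑ a, ∑ c, f a b c := Finset.sum_comm
    _ = ∑ b, ∑ c, ∑ a, f a b c := Finset.sum_congr rfl fun b _ => Finset.sum_comm

lemma tr_res_expand (W Eω : Matrix (Fin q) (Fin N) ℝ) (P : Matrix (Fin N) (Fin N) ℝ) :
    Matrix.trace (((W + Eω) * P)ᵀ * ((W + Eω) * P))
      = Matrix.trace (Wᵀ * W * (P * Pᵀ)) + Matrix.trace (Wᵀ * Eω * (P * Pᵀ))
        + Matrix.trace (Eωᵀ * W * (P * Pᵀ)) + Matrix.trace (Eωᵀ * Eω * (P * Pᵀ)) := by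
  have h1 : ((W + Eω) * P)ᵀ * ((W + Eω) * P)
      = Pᵀ * ((W + Eω)ᵀ * (W + Eω)) * P := by
    rw [Matrix.transpose_mul]
    noncomm_ring [Matrix.mul_assoc]
  rw [h1, Matrix.trace_mul_cycle (Pᵀ) ((W + Eω)ᵀ * (W + Eω)) P, Matrix.trace_mul_comm]
  simp only [Matrix.transpose_add, Matrix.add_mul, Matrix.mul_add, Matrix.trace_add]
  abel

lemma trace_CEQ (C : Matrix (Fin N) (Fin q) ℝ) (Eω : Matrix (Fin q) (Fin N) ℝ)
    (Q : Matrix (Fin N) (Fin N) ℝ) :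
    Matrix.trace (C * Eω * Q) = ∑ i : Fin q, ∑ j : Fin N, (Q * C) j i * Eω i j := by
  simp only [Matrix.trace, Matrix.diag, Matrix.mul_apply, Finset.sum_mul, Finset.mul_sum]
  rw [sum3_rev (f := fun (i : Fin q) (b : Fin N) (a : Fin N) => Q b a * C a i * Eω i b)]
  refine Finset.sum_congr rfl fun a _ => Finset.sum_congr rfl fun b _ =>
    Finset.sum_congr rfl fun i _ => by ring

lemma trace_EtWQ (Eω W : Matrix (Fin q) (Fin N) ℝ) (Q : Matrix (Fin N) (Fin N) ℝ) :
    Matrix.trace (Eωᵀ * W * Q) = ∑ i : Fin q, ∑ j : Fin N, (W * Q) i j * Eω i j := by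
  simp only [Matrix.trace, Matrix.diag, Matrix.mul_apply, Matrix.transpose_apply,
    Finset.sum_mul, Finset.mul_sum]
  rw [sum3_cyc (f := fun (c : Fin q) (a : Fin N) (b : Fin N) => W c b * Q b a * Eω c a)]
  refine Finset.sum_congr rfl fun a _ => Finset.sum_congr rfl fun b _ =>
    Finset.sum_congr rfl fun c _ => by ring

lemma trace_EEQ (Eω : Matrix (Fin q) (Fin N) ℝ) (Q : Matrix (Fin N) (Fin N) ℝ) :
    Matrix.trace (Eωᵀ * Eω * Q)
      = ∑ j : Fin N, ∑ j' : Fin N, ∑ i : Fin q, Eω i j * Eω i j' * Q j' j := by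
  simp only [Matrix.trace, Matrix.diag, Matrix.mul_apply, Matrix.transpose_apply,
    Finset.sum_mul, Finset.mul_sum]

end TraceHelpers

/-- Conditional total training error in the Gauss–Markov linear model
`Y = Bᵀ X + E`, `E ~ MN(0, Σ_ε, I_N)`:
`(1/N) trace E[(Y - B̂_λᵀX)ᵀ(Y - B̂_λᵀX)] = trace Σ_ε
  + (1/N) trace Σ_ε · trace(Z_λ(R_λ X Xᵀ - 2I_p)) + λ²N trace(R_λ B Bᵀ R_λ X Xᵀ)`. -/
theorem ridge_conditional_total_training_error (p q N : ℕ) (hN : 0 < N)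
    {Ω : Type*} [MeasurableSpace Ω] (μ : Measure Ω) [IsProbabilityMeasure μ]
    (lam : ℝ) (hlam : 0 < lam)
    (X : Matrix (Fin p) (Fin N) ℝ) (A : Matrix (Fin N) (Fin N) ℝ)
    (hA : A = 1 - (N : ℝ)⁻¹ • Matrix.vecMulVec (fun _ => (1 : ℝ)) (fun _ => (1 : ℝ)))
    (B : Matrix (Fin p) (Fin q) ℝ)
    (E : Ω → Matrix (Fin q) (Fin N) ℝ)
    (hE : ∀ i j, Measurable (fun ω => E ω i j))
    (Seps : Matrix (Fin q) (Fin q) ℝ) (hSpsd : Seps.PosSemidef)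
    (hMN : IsMatrixNormal μ E 0 Seps 1)
    (Y : Ω → Matrix (Fin q) (Fin N) ℝ) (hY : ∀ ω, Y ω = Bᵀ * X + E ω)
    (R : Matrix (Fin p) (Fin p) ℝ)
    (hR₁ : R * (X * A * Xᵀ + (lam * N) • 1) = 1)
    (hR₂ : (X * A * Xᵀ + (lam * N) • 1) * R = 1)
    (Z : Matrix (Fin p) (Fin p) ℝ) (hZ : Z = R * (X * A * Xᵀ))
    (Bhatlam : Ω → Matrix (Fin p) (Fin q) ℝ)
    (hBhatlam : ∀ ω, Bhatlam ω = R * (X * A * (Y ω)ᵀ)) :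
    (N : ℝ)⁻¹ * ∫ ω, Matrix.trace ((Y ω - (Bhatlam ω)ᵀ * X)ᵀ * (Y ω - (Bhatlam ω)ᵀ * X)) ∂μ =
      Matrix.trace Seps
        + (N : ℝ)⁻¹ * Matrix.trace Seps * Matrix.trace (Z * (R * (X * Xᵀ) - 2 • 1))
        + lam ^ 2 * N * Matrix.trace (R * B * Bᵀ * R * (X * Xᵀ)) := by
  have hNR : (N:ℝ) ≠ 0 := Nat.cast_ne_zero.mpr hN.ne'
  have hSh : Sepsᵀ = Seps := by
    ext i j
    have h := congrFun (congrFun hSpsd.1 i) j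
    simpa using h
  -- A facts
  have hAt : Aᵀ = A := by
    rw [hA]
    ext i j
    simp [Matrix.transpose_apply, Matrix.vecMulVec_apply, Matrix.one_apply, eq_comm]
  have hAA : A * A = A := by
    rw [hA]
    ext i j
    simp [Matrix.mul_apply, Matrix.sub_apply, Matrix.smul_apply, Matrix.one_apply,
      Matrix.vecMulVec_apply, sub_mul, mul_sub, Finset.sum_sub_distrib,
      Finset.sum_ite_eq, Finset.sum_ite_eq']
    field_simp
    simp
  -- R facts
  have hMt : (X * A * Xᵀ + (lam * N) • 1)ᵀ = X * A * Xᵀ + (lam * N) • 1 := by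
    simp [Matrix.transpose_add, Matrix.transpose_smul, Matrix.transpose_one,
      Matrix.transpose_mul, Matrix.transpose_transpose, hAt, Matrix.mul_assoc]
  have hRt : Rᵀ = R := by
    have h3 : Rᵀ * (X * A * Xᵀ + (lam * N) • 1) = 1 := by
      have h := congrArg Matrix.transpose hR₂
      rwa [Matrix.transpose_mul, hMt, Matrix.transpose_one] at h
    calc Rᵀ = Rᵀ * ((X * A * Xᵀ + (lam * N) • 1) * R) := by rw [hR₂, Matrix.mul_one]
      _ = (Rᵀ * (X * A * Xᵀ + (lam * N) • 1)) * R := (Matrix.mul_assoc _ _ _).symm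
      _ = R := by rw [h3, Matrix.one_mul]
  have hXAXR : (X * A * Xᵀ) * R = 1 - (lam * (N:ℝ)) • R := by
    rw [Matrix.add_mul, Matrix.smul_mul, Matrix.one_mul] at hR₂
    exact eq_sub_of_add_eq hR₂
  -- P
  set P : Matrix (Fin N) (Fin N) ℝ := 1 - A * Xᵀ * R * X with hP
  set Q : Matrix (Fin N) (Fin N) ℝ := P * Pᵀ with hQ
  set W : Matrix (Fin q) (Fin N) ℝ := Bᵀ * X with hW
  have hXP : X * P = (lam * (N:ℝ)) • (R * X) := by
    have h1 : X * (A * (Xᵀ * (R * X))) = X - (lam * (N:ℝ)) • (R * X) := by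
      have h := congrArg (fun (M : Matrix (Fin p) (Fin p) ℝ) => M * X) hXAXR
      simp only [Matrix.sub_mul, Matrix.smul_mul, Matrix.one_mul, Matrix.mul_assoc] at h
      exact h
    rw [hP, Matrix.mul_sub, Matrix.mul_one]
    simp only [Matrix.mul_assoc]
    rw [h1]
    abel
  have hWP : W * P = (lam * (N:ℝ)) • (Bᵀ * (R * X)) := by
    rw [hW, Matrix.mul_assoc, hXP, Matrix.mul_smul]
  have hres : ∀ ω, Y ω - (Bhatlam ω)ᵀ * X = (Bᵀ * X + E ω) * P := by
    intro ω
    have h1 : (Bhatlam ω)ᵀ * X = Y ω * (A * Xᵀ * R * X) := by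
      rw [hBhatlam]
      simp only [Matrix.transpose_mul, Matrix.transpose_transpose, hAt, hRt,
        Matrix.mul_assoc]
    rw [h1, hP, ← hY]
    rw [Matrix.mul_sub, Matrix.mul_one]
  -- the integrand identity
  have hint : ∀ ω, Matrix.trace ((Y ω - (Bhatlam ω)ᵀ * X)ᵀ * (Y ω - (Bhatlam ω)ᵀ * X))
      = Matrix.trace (Wᵀ * W * Q)
        + ((∑ i, ∑ j, (Q * Wᵀ) j i * E ω i j)
          + ((∑ i, ∑ j, (W * Q) i j * E ω i j)
            + (∑ j, ∑ j', ∑ i, E ω i j * E ω i j' * Q j' j))) := by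
    intro ω
    rw [hres ω, ← hW, tr_res_expand W (E ω) P, ← hQ,
      trace_CEQ Wᵀ (E ω) Q, trace_EtWQ (E ω) W Q, trace_EEQ (E ω) Q]
    ring
  -- integrability
  have hI2 : Integrable (fun ω => ∑ i, ∑ j, (Q * Wᵀ) j i * E ω i j) μ :=
    integrable_finset_sum _ fun i _ => integrable_finset_sum _ fun j _ =>
      (entry_integrable hE hMN i j).const_mul _
  have hI3 : Integrable (fun ω => ∑ i, ∑ j, (W * Q) i j * E ω i j) μ :=
    integrable_finset_sum _ fun i _ => integrable_finset_sum _ fun j _ =>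
      (entry_integrable hE hMN i j).const_mul _
  have hI4 : Integrable (fun ω => ∑ j, ∑ j', ∑ i, E ω i j * E ω i j' * Q j' j) μ :=
    integrable_finset_sum _ fun j _ => integrable_finset_sum _ fun j' _ =>
      integrable_finset_sum _ fun i _ =>
        (entry_mul_integrable hE hMN hSh i i j j').mul_const _
  -- integrals
  have hInt2 : ∫ ω, (∑ i, ∑ j, (Q * Wᵀ) j i * E ω i j) ∂μ = 0 := by
    rw [integral_finset_sum _ fun i _ => integrable_finset_sum _ fun j _ =>
      (entry_integrable hE hMN i j).const_mul _]
    refine Finset.sum_eq_zero fun i _ => ?_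
    rw [integral_finset_sum _ fun j _ => (entry_integrable hE hMN i j).const_mul _]
    refine Finset.sum_eq_zero fun j _ => ?_
    rw [integral_const_mul, entry_integral hE hMN i j, mul_zero]
  have hInt3 : ∫ ω, (∑ i, ∑ j, (W * Q) i j * E ω i j) ∂μ = 0 := by
    rw [integral_finset_sum (f := fun i ω => ∑ j, (W * Q) i j * E ω i j) _ fun i _ => integrable_finset_sum _ fun j _ =>
      (entry_integrable hE hMN i j).const_mul _]
    refine Finset.sum_eq_zero fun i _ => ?_
    rw [integral_finset_sum _ fun j _ => (entry_integrable hE hMN i j).const_mul _]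
    refine Finset.sum_eq_zero fun j _ => ?_
    rw [integral_const_mul, entry_integral hE hMN i j, mul_zero]
  have hInt4 : ∫ ω, (∑ j, ∑ j', ∑ i, E ω i j * E ω i j' * Q j' j) ∂μ
      = Matrix.trace Seps * Matrix.trace Q := by
    rw [integral_finset_sum _ fun j _ => integrable_finset_sum _ fun j' _ =>
      integrable_finset_sum _ fun i _ =>
        (entry_mul_integrable hE hMN hSh i i j j').mul_const _]
    have step : ∀ j : Fin N, ∫ ω, (∑ j', ∑ i, E ω i j * E ω i j' * Q j' j) ∂μ
        = Matrix.trace Seps * Q j j := by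
      intro j
      rw [integral_finset_sum _ fun j' _ => integrable_finset_sum _ fun i _ =>
        (entry_mul_integrable hE hMN hSh i i j j').mul_const _]
      have inner : ∀ j' : Fin N, ∫ ω, (∑ i, E ω i j * E ω i j' * Q j' j) ∂μ
          = (if j = j' then Matrix.trace Seps * Q j j else 0) := by
        intro j'
        rw [integral_finset_sum _ fun i _ =>
          (entry_mul_integrable hE hMN hSh i i j j').mul_const _]
        by_cases hjj : j = j'
        · subst hjj
          rw [if_pos rfl]
          have : ∀ i : Fin q, ∫ ω, E ω i j * E ω i j * Q j j ∂μ = Seps i i * Q j j := by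
            intro i
            rw [integral_mul_const, entry_mul_integral hSpsd hE hMN hSh i i j j, if_pos rfl]
          simp_rw [this]
          rw [Matrix.trace, Finset.sum_mul]
          rfl
        · rw [if_neg hjj]
          refine Finset.sum_eq_zero fun i _ => ?_
          rw [integral_mul_const, entry_mul_integral hSpsd hE hMN hSh i i j j', if_neg hjj,
            zero_mul]
      simp_rw [inner]
      simp
    simp_rw [step]
    simp [Matrix.trace, Matrix.diag, Finset.mul_sum]
  -- main trace algebra
  have hT0 : Matrix.trace (Wᵀ * W * Q)
      = lam ^ 2 * (N:ℝ) ^ 2 * Matrix.trace (R * B * Bᵀ * R * (X * Xᵀ)) := by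
    have e0 : Matrix.trace (Wᵀ * W * Q) = Matrix.trace ((W * P) * (W * P)ᵀ) := by
      rw [hQ, Matrix.transpose_mul W P]
      simp only [Matrix.mul_assoc]
      rw [Matrix.trace_mul_comm Wᵀ (W * (P * Pᵀ))]
      simp only [Matrix.mul_assoc]
    have e2 : Matrix.trace ((Bᵀ * (R * X)) * (Bᵀ * (R * X))ᵀ)
        = Matrix.trace (R * B * Bᵀ * R * (X * Xᵀ)) := by
      simp only [Matrix.transpose_mul, Matrix.transpose_transpose, hRt, Matrix.mul_assoc]
      rw [Matrix.trace_mul_comm Bᵀ (R * (X * (Xᵀ * (R * B))))]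
      simp only [Matrix.mul_assoc]
      rw [Matrix.trace_mul_comm R (X * (Xᵀ * (R * (B * Bᵀ))))]
      simp only [Matrix.mul_assoc]
      rw [Matrix.trace_mul_comm X (Xᵀ * (R * (B * (Bᵀ * R))))]
      simp only [Matrix.mul_assoc]
      rw [Matrix.trace_mul_comm Xᵀ (R * (B * (Bᵀ * (R * X))))]
      simp only [Matrix.mul_assoc]
    rw [e0, hWP]
    simp only [Matrix.transpose_smul, Matrix.smul_mul, Matrix.mul_smul, smul_smul,
      Matrix.trace_smul, smul_eq_mul]
    rw [e2]
    ring
  have hQtr : Matrix.trace Q = (N:ℝ) + Matrix.trace (Z * (R * (X * Xᵀ) - 2 • 1)) := by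
    have hPt : Pᵀ = 1 - Xᵀ * (R * (X * A)) := by
      rw [hP]
      simp only [Matrix.transpose_sub, Matrix.transpose_one, Matrix.transpose_mul,
        Matrix.transpose_transpose, hAt, hRt, Matrix.mul_assoc]
    have tU : Matrix.trace (A * (Xᵀ * (R * X))) = Matrix.trace Z := by
      rw [hZ]
      rw [Matrix.trace_mul_comm A (Xᵀ * (R * X))]
      simp only [Matrix.mul_assoc]
      rw [Matrix.trace_mul_comm Xᵀ (R * (X * A))]
      simp only [Matrix.mul_assoc]
    have tV : Matrix.trace (Xᵀ * (R * (X * A))) = Matrix.trace Z := by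
      rw [hZ]
      rw [Matrix.trace_mul_comm Xᵀ (R * (X * A))]
      simp only [Matrix.mul_assoc]
    have tUV : Matrix.trace ((A * Xᵀ * R * X) * (Xᵀ * (R * (X * A))))
        = Matrix.trace (Z * (R * (X * Xᵀ))) := by
      simp only [Matrix.mul_assoc]
      rw [Matrix.trace_mul_comm A (Xᵀ * (R * (X * (Xᵀ * (R * (X * A))))))]
      simp only [Matrix.mul_assoc]
      rw [show X * (A * A) = X * A from by rw [← Matrix.mul_assoc, Matrix.mul_assoc X A A, hAA]]
      rw [Matrix.trace_mul_comm Xᵀ (R * (X * (Xᵀ * (R * (X * A)))))]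
      simp only [Matrix.mul_assoc]
      rw [Matrix.trace_mul_comm R (X * (Xᵀ * (R * (X * (A * Xᵀ)))))]
      simp only [Matrix.mul_assoc]
      rw [Matrix.trace_mul_comm X (Xᵀ * (R * (X * (A * (Xᵀ * R)))))]
      simp only [Matrix.mul_assoc]
      rw [Matrix.trace_mul_comm Xᵀ (R * (X * (A * (Xᵀ * (R * X)))))]
      rw [hZ]
      simp only [Matrix.mul_assoc]
    have hQexp : Q = 1 - Xᵀ * (R * (X * A)) - (A * Xᵀ * R * X)
        + (A * Xᵀ * R * X) * (Xᵀ * (R * (X * A))) := by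
      rw [hQ, hPt, hP]
      simp only [Matrix.sub_mul, Matrix.mul_sub, Matrix.mul_one, Matrix.one_mul]
      abel
    have hZ2 : Matrix.trace (Z * (R * (X * Xᵀ) - 2 • 1))
        = Matrix.trace (Z * (R * (X * Xᵀ))) - 2 * Matrix.trace Z := by
      rw [Matrix.mul_sub, Matrix.trace_sub, Matrix.mul_smul, Matrix.mul_one,
        Matrix.trace_smul]
      simp
    rw [hQexp, hZ2]
    rw [Matrix.trace_add, Matrix.trace_sub, Matrix.trace_sub, Matrix.trace_one]
    have hcard : (Fintype.card (Fin N) : ℝ) = (N:ℝ) := by simp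
    rw [hcard, tUV, tV]
    have tU' : Matrix.trace (A * Xᵀ * R * X) = Matrix.trace Z := by
      rw [← tU]
      simp only [Matrix.mul_assoc]
    rw [tU']
    ring
  -- assemble
  calc (N : ℝ)⁻¹ * ∫ ω, Matrix.trace ((Y ω - (Bhatlam ω)ᵀ * X)ᵀ * (Y ω - (Bhatlam ω)ᵀ * X)) ∂μ
      = (N : ℝ)⁻¹ * (Matrix.trace (Wᵀ * W * Q)
          + (0 + (0 + Matrix.trace Seps * Matrix.trace Q))) := by
        congr 1
        have hI34 : Integrable (fun ω => (∑ i, ∑ j, (W * Q) i j * E ω i j)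
            + (∑ j, ∑ j', ∑ i, E ω i j * E ω i j' * Q j' j)) μ := hI3.add hI4
        have hI234 : Integrable (fun ω => (∑ i, ∑ j, (Q * Wᵀ) j i * E ω i j)
            + ((∑ i, ∑ j, (W * Q) i j * E ω i j)
              + (∑ j, ∑ j', ∑ i, E ω i j * E ω i j' * Q j' j))) μ := hI2.add hI34
        simp_rw [hint]
        rw [integral_add (integrable_const _) hI234, integral_add hI2 hI34,
          integral_add hI3 hI4, hInt2, hInt3, hInt4, integral_const]
        simp
    _ = Matrix.trace Seps
        + (N : ℝ)⁻¹ * Matrix.trace Seps * Matrix.trace (Z * (R * (X * Xᵀ) - 2 • 1))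
        + lam ^ 2 * N * Matrix.trace (R * B * Bᵀ * R * (X * Xᵀ)) := by
        rw [hT0, hQtr]
        field_simp
        ring
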